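/- If α ≤ γ and Q = A + ((γ − α)/γ) • (B − A) (the point of the segment [A,B] at distance γ − α from A), then dist C Q = √( α·(β + γ − α)·(α + β − γ)/γ ). -/

import Mathlib

/-- If `α ≤ γ` and `Q` is the point of the segment `[A,B]` at distance `γ − α`
from `A`, then `dist C Q = √(α(β + γ − α)(α + β − γ)/γ)`. -/
theorem stmt9 (A B C : EuclideanSpace ℝ (Fin 2)) (α β γ : ℝ)
    (hα : α = dist B C) (hβ : β = dist C A) (hγ : γ = dist A B)
    (hαpos : 0 < α) (hγpos : 0 < γ) (h : α ≤ γ)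
    (Q : EuclideanSpace ℝ (Fin 2)) (hQ : Q = A + ((γ - α) / γ) • (B - A)) :
    dist C Q = Real.sqrt (α * (β + γ - α) * (α + β - γ) / γ) := by
  set x : EuclideanSpace ℝ (Fin 2) := C - A with hx
  set y : EuclideanSpace ℝ (Fin 2) := B - A with hy
  set t : ℝ := (γ - α) / γ with ht
  have hγne : γ ≠ 0 := ne_of_gt hγpos
  have hβ2 : β ^ 2 = ‖x‖ ^ 2 := by
    rw [hβ, dist_eq_norm, hx]
  have hγ2 : γ ^ 2 = ‖y‖ ^ 2 := by
    rw [hγ, dist_eq_norm, hy, ← norm_neg]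
    congr 1
    abel
  have hα2 : α ^ 2 = ‖y - x‖ ^ 2 := by
    rw [hα, dist_eq_norm, hx, hy]
    congr 1
    abel
  have hinner : 2 * (inner ℝ x y : ℝ) = β ^ 2 + γ ^ 2 - α ^ 2 := by
    have h1 : ‖y - x‖ ^ 2 = ‖y‖ ^ 2 - 2 * (inner ℝ y x : ℝ) + ‖x‖ ^ 2 :=
      norm_sub_sq_real y x
    rw [hβ2, hγ2, hα2, h1, real_inner_comm]
    ring
  have hCQ : C - Q = x - t • y := by
    rw [hQ, hx, hy]
    module
  have hsq : dist C Q ^ 2 = β ^ 2 - t * (2 * (inner ℝ x y : ℝ)) + t ^ 2 * γ ^ 2 := by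
    have h1 : ‖x - t • y‖ ^ 2 = ‖x‖ ^ 2 - 2 * (inner ℝ x (t • y) : ℝ) + ‖t • y‖ ^ 2 :=
      norm_sub_sq_real x (t • y)
    rw [dist_eq_norm, hCQ, h1, real_inner_smul_right, norm_smul, hβ2, hγ2]
    simp [mul_pow, sq_abs]
    ring
  have key : dist C Q ^ 2 = α * (β + γ - α) * (α + β - γ) / γ := by
    rw [hsq, hinner, ht]
    field_simp
    ring
  rw [← Real.sqrt_sq dist_nonneg, key]
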